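/- Let E be a counterclockwise-oriented d-minimal segment not lying on a line through the origin. Then W(E) ≡ dis(E) (mod d), where dis(E) is the number of lattice lines of L_d parallel to E strictly between the origin's parallel line and the line containing E, plus one (equivalently, the lattice-distance of the line containing E from the origin). -/

import Mathlib

noncomputable section

/-- The lattice `(1/d)ℤ × (1/d)ℤ` inside `ℝ × ℝ`. -/
def Ld (d : ℕ) : Set (ℝ × ℝ) :=
  {p | ∃ a b : ℤ, p = ((a : ℝ) / d, (b : ℝ) / d)}

/-- A `d`-minimal triangle: vertices in `L_d`, not collinear, and the closed triangle
meets `L_d` exactly in its three vertices. -/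
def IsMinimalTriangle (d : ℕ) (p q r : ℝ × ℝ) : Prop :=
  p ∈ Ld d ∧ q ∈ Ld d ∧ r ∈ Ld d ∧
    ¬ Collinear ℝ ({p, q, r} : Set (ℝ × ℝ)) ∧
    convexHull ℝ ({p, q, r} : Set (ℝ × ℝ)) ∩ Ld d = {p, q, r}

/-- An element of `G = GL₂(ℤ) ⋉ ℤ²`: an integer matrix `[[a,b],[c,e]]` of determinant
`±1` together with an integer translation vector `(v1, v2)`. -/
structure GMap where
  a : ℤ
  b : ℤ
  c : ℤ
  e : ℤ
  v1 : ℤ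
  v2 : ℤ
  unimod : a * e - b * c = 1 ∨ a * e - b * c = -1

/-- The affine action `x ↦ Ux + v` of a `GMap` on `ℝ²`. -/
def GMap.app (g : GMap) (p : ℝ × ℝ) : ℝ × ℝ :=
  ((g.a : ℝ) * p.1 + (g.b : ℝ) * p.2 + (g.v1 : ℝ),
   (g.c : ℝ) * p.1 + (g.e : ℝ) * p.2 + (g.v2 : ℝ))

/-- A `d`-minimal segment: endpoints in `L_d`, distinct, and the closed segment meets
`L_d` exactly in its two endpoints. -/
def IsMinimalSegment (d : ℕ) (p q : ℝ × ℝ) : Prop :=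
  p ∈ Ld d ∧ q ∈ Ld d ∧ p ≠ q ∧ segment ℝ p q ∩ Ld d = {p, q}

/-- The point of `L_d` with integer numerator data `p : ℤ × ℤ`. -/
def pt (d : ℕ) (p : ℤ × ℤ) : ℝ × ℝ := ((p.1 : ℝ) / d, (p.2 : ℝ) / d)

/-- Counterclockwise orientation of the ordered triple of numerator data. -/
def ccwZ (p q r : ℤ × ℤ) : Prop :=
  0 < (q.1 - p.1) * (r.2 - p.2) - (q.2 - p.2) * (r.1 - p.1)

/-- Weight (mod `d`) of the oriented minimal segment from `(w/d, x/d)` to `(y/d, z/d)`,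
given by numerator data `(w,x)` and `(y,z)`. -/
def segWeight (d : ℕ) (p q : ℤ × ℤ) : ZMod d :=
  ((p.1 * q.2 - p.2 * q.1 : ℤ) : ZMod d)

/-- The multiset of weights of the three edges `p→q`, `q→r`, `r→p` of a triangle
given by numerator data. -/
def triWeight (d : ℕ) (p q r : ℤ × ℤ) : Multiset (ZMod d) :=
  {segWeight d p q, segWeight d q r, segWeight d r p}

/-- Dot product on `ℝ × ℝ`. -/
def dot (a b : ℝ × ℝ) : ℝ := a.1 * b.1 + a.2 * b.2

/-- `L` is a line with direction `u`. -/
def IsParLine (u : ℝ × ℝ) (L : Set (ℝ × ℝ)) : Prop :=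
  ∃ a : ℝ × ℝ, L = {x | ∃ t : ℝ, x = a + t • u}

/-- The foot of the perpendicular from the origin to the line through `p` with
direction `q - p`. -/
def foot (p q : ℝ × ℝ) : ℝ × ℝ :=
  p - (dot p (q - p) / dot (q - p) (q - p)) • (q - p)

/-- The lattice-distance `dis(E)` of the segment from `p` to `q`: the number of
`L_d`-lines parallel to `E` meeting the closed perpendicular segment from the origin
to the line containing `E`, minus one. -/
def dis (d : ℕ) (p q : ℝ × ℝ) : ℕ :=
  Set.ncard {L : Set (ℝ × ℝ) | IsParLine (q - p) L ∧ (L ∩ Ld d).Nonempty ∧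
    (L ∩ segment ℝ (0 : ℝ × ℝ) (foot p q)).Nonempty} - 1

/-- Auxiliary linear functional `v ↦ b v₁ - a v₂`. -/
private def Ff (a b : ℤ) (v : ℝ × ℝ) : ℝ := (b : ℝ) * v.1 - (a : ℝ) * v.2

/-- The level set of `Ff` at `k / d`. -/
private def gline (d : ℕ) (a b : ℤ) (k : ℤ) : Set (ℝ × ℝ) :=
  {v | Ff a b v = (k : ℝ) / d}

/-- A lattice point on `gline d a b k`, given Bezout data `b*m - a*n = 1`. -/
private def pkpt (d : ℕ) (m n k : ℤ) : ℝ × ℝ :=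
  (((k * m : ℤ) : ℝ) / d, ((k * n : ℤ) : ℝ) / d)

private lemma Ff_smul (a b : ℤ) (s : ℝ) (v : ℝ × ℝ) :
    Ff a b (s • v) = s * Ff a b v := by
  simp only [Ff, Prod.smul_fst, Prod.smul_snd, smul_eq_mul]
  ring

private lemma Ff_pkpt (d : ℕ) (hd : (d : ℝ) ≠ 0) (a b m n k : ℤ)
    (hmn : b * m - a * n = 1) :
    Ff a b (pkpt d m n k) = (k : ℝ) / d := by
  have h : (b : ℝ) * m - (a : ℝ) * n = 1 := by exact_mod_cast hmn
  simp only [Ff, pkpt]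
  push_cast
  field_simp
  linear_combination (k : ℝ) * h

private lemma line_eq (d : ℕ) (hd : 0 < d) (a b : ℤ) (hab : ¬(a = 0 ∧ b = 0))
    (u : ℝ × ℝ) (hu1 : u.1 = (a : ℝ) / d) (hu2 : u.2 = (b : ℝ) / d) (c : ℝ × ℝ) :
    {x : ℝ × ℝ | ∃ t : ℝ, x = c + t • u} = {x | Ff a b x = Ff a b c} := by
  have hd' : (d : ℝ) ≠ 0 := by positivity
  ext v
  simp only [Set.mem_setOf_eq]
  constructor
  · rintro ⟨t, rfl⟩
    simp only [Ff, Prod.fst_add, Prod.snd_add, Prod.smul_fst, Prod.smul_snd,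
      smul_eq_mul, hu1, hu2]
    field_simp
    ring
  · intro hv
    have hv' : (b : ℝ) * v.1 - (a : ℝ) * v.2 = (b : ℝ) * c.1 - (a : ℝ) * c.2 := hv
    rcases em (a = 0) with h0 | h0
    · have hb : (b : ℝ) ≠ 0 := by
        have : b ≠ 0 := fun hb0 => hab ⟨h0, hb0⟩
        exact_mod_cast this
      refine ⟨(v.2 - c.2) * d / b, ?_⟩
      rw [Prod.ext_iff]
      constructor
      · show v.1 = c.1 + (v.2 - c.2) * d / b * u.1
        rw [hu1, h0]
        have h3 : (b : ℝ) * v.1 = (b : ℝ) * c.1 := by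
          rw [h0] at hv'; push_cast at hv'; linarith
        have hvc : v.1 = c.1 := mul_left_cancel₀ hb h3
        simp [hvc]
      · show v.2 = c.2 + (v.2 - c.2) * d / b * u.2
        rw [hu2]
        field_simp
        ring
    · have ha : (a : ℝ) ≠ 0 := by exact_mod_cast h0
      refine ⟨(v.1 - c.1) * d / a, ?_⟩
      rw [Prod.ext_iff]
      constructor
      · show v.1 = c.1 + (v.1 - c.1) * d / a * u.1
        rw [hu1]
        field_simp
        ring
      · show v.2 = c.2 + (v.1 - c.1) * d / a * u.2
        rw [hu2]
        field_simp
        linear_combination (-1 : ℝ) * hv'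

private lemma mem_segment_zero (fo v : ℝ × ℝ) :
    v ∈ segment ℝ (0 : ℝ × ℝ) fo ↔ ∃ s : ℝ, 0 ≤ s ∧ s ≤ 1 ∧ v = s • fo := by
  constructor
  · rintro ⟨a1, b1, ha1, hb1, hab1, hv⟩
    exact ⟨b1, hb1, by linarith, by rw [← hv]; simp⟩
  · rintro ⟨s, h0, h1, rfl⟩
    exact ⟨1 - s, s, by linarith, h0, by ring, by simp⟩

private lemma dis_eq (d : ℕ) (hd : 0 < d) (a b m n D : ℤ)
    (hmn : b * m - a * n = 1) (hD : 0 < D) (p q : ℝ × ℝ)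
    (hq1 : q.1 - p.1 = (a : ℝ) / d) (hq2 : q.2 - p.2 = (b : ℝ) / d)
    (hFp : Ff a b p = (D : ℝ) / d) :
    dis d p q = D.toNat := by
  have hd' : (d : ℝ) ≠ 0 := by positivity
  have hD' : (0 : ℝ) < (D : ℝ) := by exact_mod_cast hD
  have hab : ¬(a = 0 ∧ b = 0) := by
    rintro ⟨rfl, rfl⟩; simp at hmn
  have hu1 : (q - p).1 = (a : ℝ) / d := hq1
  have hu2 : (q - p).2 = (b : ℝ) / d := hq2
  have hFu : Ff a b (q - p) = 0 := by
    show (b : ℝ) * (q - p).1 - (a : ℝ) * (q - p).2 = 0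
    rw [hu1, hu2]; ring
  have hfoot : Ff a b (foot p q) = (D : ℝ) / d := by
    have h1 : Ff a b (foot p q)
        = Ff a b p - (dot p (q - p) / dot (q - p) (q - p)) * Ff a b (q - p) := by
      simp only [Ff, foot, Prod.fst_sub, Prod.snd_sub, Prod.smul_fst, Prod.smul_snd,
        smul_eq_mul]
      ring
    rw [h1, hFu, hFp]; ring
  have hFlevel : ∀ v : ℝ × ℝ, v ∈ segment ℝ (0 : ℝ × ℝ) (foot p q) →
      ∃ s : ℝ, 0 ≤ s ∧ s ≤ 1 ∧ Ff a b v = s * ((D : ℝ) / d) := by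
    intro v hv
    obtain ⟨s, h0, h1, rfl⟩ := (mem_segment_zero _ _).mp hv
    exact ⟨s, h0, h1, by rw [Ff_smul, hfoot]⟩
  -- the set of lines equals the image of `Set.Icc 0 D` under `gline`
  have hS : {L : Set (ℝ × ℝ) | IsParLine (q - p) L ∧ (L ∩ Ld d).Nonempty ∧
      (L ∩ segment ℝ (0 : ℝ × ℝ) (foot p q)).Nonempty}
      = gline d a b '' Set.Icc 0 D := by
    ext L
    simp only [Set.mem_setOf_eq, Set.mem_image, Set.mem_Icc]
    constructor
    · rintro ⟨⟨c, rfl⟩, ⟨w0, hw0L, m0, n0, rfl⟩, v0, hv0L, hv0seg⟩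
      have hLeq := line_eq d hd a b hab (q - p) hu1 hu2 c
      set k : ℤ := b * m0 - a * n0 with hk
      have hFw0 : Ff a b (((m0 : ℝ) / d, (n0 : ℝ) / d) : ℝ × ℝ) = (k : ℝ) / d := by
        simp only [Ff, hk]
        push_cast
        ring
      have hFc : Ff a b c = (k : ℝ) / d := by
        rw [hLeq] at hw0L
        rw [← hw0L]; exact hFw0
      have hLg : {x : ℝ × ℝ | ∃ t : ℝ, x = c + t • (q - p)} = gline d a b k := by
        rw [hLeq]; unfold gline; rw [hFc]
      have hFv0 : Ff a b v0 = (k : ℝ) / d := by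
        rw [hLg] at hv0L; exact hv0L
      obtain ⟨s, hs0, hs1, hsv⟩ := hFlevel v0 hv0seg
      have hks : (k : ℝ) = s * D := by
        rw [hFv0] at hsv
        field_simp at hsv
        linarith
      refine ⟨k, ⟨?_, ?_⟩, hLg.symm⟩
      · have : (0 : ℝ) ≤ (k : ℝ) := by rw [hks]; positivity
        exact_mod_cast this
      · have : (k : ℝ) ≤ (D : ℝ) := by
          rw [hks]; nlinarith
        exact_mod_cast this
    · rintro ⟨k, ⟨hk0, hkD⟩, rfl⟩
      have hFpk := Ff_pkpt d hd' a b m n k hmn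
      have hk0' : (0 : ℝ) ≤ (k : ℝ) := by exact_mod_cast hk0
      have hkD' : (k : ℝ) ≤ (D : ℝ) := by exact_mod_cast hkD
      refine ⟨⟨pkpt d m n k, ?_⟩, ⟨pkpt d m n k, hFpk, k * m, k * n, rfl⟩,
        ((k : ℝ) / D) • foot p q, ?_, ?_⟩
      · rw [line_eq d hd a b hab (q - p) hu1 hu2, hFpk]; rfl
      · show Ff a b _ = (k : ℝ) / d
        rw [Ff_smul, hfoot]
        field_simp
      · exact (mem_segment_zero _ _).mpr
          ⟨(k : ℝ) / D, by positivity, by rw [div_le_one hD']; exact hkD', rfl⟩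
  have hinj : Set.InjOn (gline d a b) (Set.Icc 0 D) := by
    intro k _ k' _ h
    have h1 : Ff a b (pkpt d m n k) = (k : ℝ) / d := Ff_pkpt d hd' a b m n k hmn
    have h2 : pkpt d m n k ∈ gline d a b k := h1
    rw [h] at h2
    have h3 : (k : ℝ) / d = (k' : ℝ) / d := by rw [← h1]; exact h2
    field_simp at h3
    exact_mod_cast h3
  unfold dis
  rw [hS, Set.ncard_image_of_injOn hinj, ← Finset.coe_Icc, Set.ncard_coe_finset,
    Int.card_Icc]
  omega

/-- for a counterclockwise-oriented `d`-minimal segment not lying on a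
line through the origin, the weight equals the lattice distance mod `d`. -/
theorem weight_eq_lattice_distance (d : ℕ) (hd : 0 < d) (w x y z : ℤ)
    (hmin : IsMinimalSegment d ((w : ℝ) / d, (x : ℝ) / d) ((y : ℝ) / d, (z : ℝ) / d))
    (hnotline : w * z - x * y ≠ 0)
    (hccw : 0 ≤ w * z - x * y) :
    ((w * z - x * y : ℤ) : ZMod d)
      = ((dis d ((w : ℝ) / d, (x : ℝ) / d) ((y : ℝ) / d, (z : ℝ) / d) : ℕ) : ZMod d) := by
  have hd' : (d : ℝ) ≠ 0 := by positivity
  set a : ℤ := y - w with ha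
  set b : ℤ := z - x with hb
  set D : ℤ := w * z - x * y with hDdef
  have hab : ¬(a = 0 ∧ b = 0) := by
    rintro ⟨h1, h2⟩
    apply hnotline
    have hy : y = w := by omega
    have hz : z = x := by omega
    rw [hDdef, hy, hz]; ring
  have hD : 0 < D := lt_of_le_of_ne hccw (Ne.symm hnotline)
  -- gcd a b = 1
  have hgcd : Int.gcd a b = 1 := by
    by_contra hg1
    set g : ℕ := Int.gcd a b with hg
    have hg0 : g ≠ 0 := by
      intro h0
      exact hab ⟨Int.gcd_eq_zero_iff.mp (hg ▸ h0) |>.1, Int.gcd_eq_zero_iff.mp (hg ▸ h0) |>.2⟩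
    have hg2 : 2 ≤ g := by omega
    obtain ⟨a', ha'⟩ : (g : ℤ) ∣ a := Int.gcd_dvd_left a b
    obtain ⟨b', hb'⟩ : (g : ℤ) ∣ b := Int.gcd_dvd_right a b
    have hgR : (0 : ℝ) < (g : ℝ) := by
      have : 0 < g := by omega
      exact_mod_cast this
    have hgR1 : (1 : ℝ) ≤ (g : ℝ) := by exact_mod_cast Nat.one_le_iff_ne_zero.mpr hg0
    have hgR2 : (2 : ℝ) ≤ (g : ℝ) := by exact_mod_cast hg2
    set r : ℝ × ℝ := (((w + a' : ℤ) : ℝ) / d, ((x + b' : ℤ) : ℝ) / d) with hr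
    have hyR : (y : ℝ) = (w : ℝ) + (g : ℝ) * (a' : ℝ) := by
      have : (y : ℝ) - (w : ℝ) = (g : ℝ) * (a' : ℝ) := by exact_mod_cast congrArg (Int.cast : ℤ → ℝ) (ha ▸ ha')
      linarith
    have hzR : (z : ℝ) = (x : ℝ) + (g : ℝ) * (b' : ℝ) := by
      have : (z : ℝ) - (x : ℝ) = (g : ℝ) * (b' : ℝ) := by exact_mod_cast congrArg (Int.cast : ℤ → ℝ) (hb ▸ hb')
      linarith
    have hrseg : r ∈ segment ℝ ((w : ℝ) / d, (x : ℝ) / d) ((y : ℝ) / d, (z : ℝ) / d) := by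
      refine ⟨1 - 1 / g, 1 / g, by
        have : 1 / (g : ℝ) ≤ 1 := by
          rw [div_le_one hgR]; exact hgR1
        linarith, by positivity, by ring, ?_⟩
      rw [Prod.ext_iff]
      constructor
      · show (1 - 1 / (g : ℝ)) * ((w : ℝ) / d) + (1 / g) * ((y : ℝ) / d) = ((w + a' : ℤ) : ℝ) / d
        push_cast
        rw [hyR]
        field_simp
        ring
      · show (1 - 1 / (g : ℝ)) * ((x : ℝ) / d) + (1 / g) * ((z : ℝ) / d) = ((x + b' : ℤ) : ℝ) / d
        push_cast
        rw [hzR]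
        field_simp
        ring
    have hrLd : r ∈ Ld d := ⟨w + a', x + b', rfl⟩
    have hr2 : r ∈ ({((w : ℝ) / d, (x : ℝ) / d), ((y : ℝ) / d, (z : ℝ) / d)} :
        Set (ℝ × ℝ)) := by
      rw [← hmin.2.2.2]; exact ⟨hrseg, hrLd⟩
    have ha'0b'0 : a' = 0 ∧ b' = 0 := by
      have haa : y - w = (g : ℤ) * a' := by rw [← ha]; exact ha'
      have hbb : z - x = (g : ℤ) * b' := by rw [← hb]; exact hb'
      rcases hr2 with hre | hre
      · have h1 : ((w + a' : ℤ) : ℝ) / d = (w : ℝ) / d := congrArg Prod.fst hre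
        have h2 : ((x + b' : ℤ) : ℝ) / d = (x : ℝ) / d := congrArg Prod.snd hre
        field_simp at h1 h2
        exact ⟨by norm_cast at h1; omega, by norm_cast at h2; omega⟩
      · have h1 : ((w + a' : ℤ) : ℝ) / d = (y : ℝ) / d := congrArg Prod.fst hre
        have h2 : ((x + b' : ℤ) : ℝ) / d = (z : ℝ) / d := congrArg Prod.snd hre
        field_simp at h1 h2
        have h1' : w + a' = y := by exact_mod_cast h1
        have h2' : x + b' = z := by exact_mod_cast h2
        have ha2 : (g : ℤ) * a' = a' := by linarith
        have hb2 : (g : ℤ) * b' = b' := by linarith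
        have h4 : ((g : ℤ) - 1) * a' = 0 := by
          have e : ((g : ℤ) - 1) * a' = (g : ℤ) * a' - a' := by ring
          rw [e, ha2]; ring
        have h5 : ((g : ℤ) - 1) * b' = 0 := by
          have e : ((g : ℤ) - 1) * b' = (g : ℤ) * b' - b' := by ring
          rw [e, hb2]; ring
        constructor
        · rcases mul_eq_zero.mp h4 with h | h
          · exfalso; omega
          · exact h
        · rcases mul_eq_zero.mp h5 with h | h
          · exfalso; omega
          · exact h
    exact hab ⟨by rw [ha']; rw [ha'0b'0.1]; ring, by rw [hb']; rw [ha'0b'0.2]; ring⟩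
  -- Bezout
  have hbez : ∃ m n : ℤ, b * m - a * n = 1 := by
    have h := Int.gcd_eq_gcd_ab a b
    rw [hgcd] at h
    exact ⟨Int.gcdB a b, -Int.gcdA a b, by push_cast at h; linarith⟩
  obtain ⟨m, n, hmn⟩ := hbez
  have hq1 : ((y : ℝ) / d, (z : ℝ) / d).1 - ((w : ℝ) / d, (x : ℝ) / d).1 = (a : ℝ) / d := by
    show (y : ℝ) / d - (w : ℝ) / d = (a : ℝ) / d
    rw [ha]; push_cast; ring
  have hq2 : ((y : ℝ) / d, (z : ℝ) / d).2 - ((w : ℝ) / d, (x : ℝ) / d).2 = (b : ℝ) / d := by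
    show (z : ℝ) / d - (x : ℝ) / d = (b : ℝ) / d
    rw [hb]; push_cast; ring
  have hFp : Ff a b ((w : ℝ) / d, (x : ℝ) / d) = (D : ℝ) / d := by
    show (b : ℝ) * ((w : ℝ) / d) - (a : ℝ) * ((x : ℝ) / d) = (D : ℝ) / d
    rw [ha, hb, hDdef]; push_cast; ring
  have hdis := dis_eq d hd a b m n D hmn hD
    ((w : ℝ) / d, (x : ℝ) / d) ((y : ℝ) / d, (z : ℝ) / d) hq1 hq2 hFp
  rw [hdis]
  rw [show ((D.toNat : ℕ) : ZMod d) = ((D : ℤ) : ZMod d) by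
    rw [← Int.cast_natCast, Int.toNat_of_nonneg hD.le]]
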